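/- arXiv:1907.11415 — 2 statements merged into one kernel-verified Lean document; each statement's English description precedes it below -/
import Mathlib

section
/- Let T be a semistandard multiset-valued tableau of shape λ with entries at most n, and suppose the crystal operator f_i applied to T is nonzero. Then the reading word of f_i T equals f_i applied to the reading word of T; that is, the entry i changed to i+1 does not change its position in the reading word. -/
/-! Signature rule on words: `+` for letter `i`, `-` for letter `i+1`,
cancel ordered pairs `-+`, leaving `+^p -^m`. -/

/-- Scanning left to right, returns (number of uncanceled `+`, number of uncanceled `-`). -/
def sigFold (i : ℕ) (w : List ℕ) : ℕ × ℕ :=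
  w.foldl (fun pm a =>
    if a = i then (if 0 < pm.2 then (pm.1, pm.2 - 1) else (pm.1 + 1, pm.2))
    else if a = i + 1 then (pm.1, pm.2 + 1) else pm) (0, 0)

/-- Position of the rightmost uncanceled `+` (a letter `i`). -/
def fPos (i : ℕ) (w : List ℕ) : Option ℕ :=
  ((List.range w.length).filter
    (fun j => decide (w[j]? = some i ∧ (sigFold i (w.take j)).2 = 0))).getLast?

/-- Position of the leftmost uncanceled `-` (a letter `i+1`). -/
def ePos (i : ℕ) (w : List ℕ) : Option ℕ :=
  ((List.range w.length).filter
    (fun j => decide (w[j]? = some (i + 1) ∧ (sigFold i (w.drop (j + 1))).1 = 0))).head?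

/-- The crystal operator `f_i` on words: change the `i` at the rightmost uncanceled `+`
into an `i+1`. -/
def fWord (i : ℕ) (w : List ℕ) : Option (List ℕ) :=
  (fPos i w).map (fun j => w.set j (i + 1))

/-- The crystal operator `e_i` on words: change the `i+1` at the leftmost uncanceled `-`
into an `i`. -/
def eWord (i : ℕ) (w : List ℕ) : Option (List ℕ) :=
  (ePos i w).map (fun j => w.set j i)

/-! Multiset-valued tableaux. -/

/-- `sh` is a partition: weakly decreasing list of positive integers. -/
def IsPartition (sh : List ℕ) : Prop :=
  sh.Pairwise (· ≥ ·) ∧ ∀ x ∈ sh, 0 < x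

/-- The box in row `r`, column `c` (both 0-indexed) belongs to the Young diagram of `sh`. -/
abbrev InShape (sh : List ℕ) (r c : ℕ) : Prop := c < sh.getD r 0

/-- A (semistandard) multiset-valued tableau of shape `sh` with entries in `{1, …, n}`:
every box of the shape is filled with a finite nonempty multiset, rows weakly increase
(max of a box ≤ min of the box to its right) and columns strictly increase. -/
def IsMVT (n : ℕ) (sh : List ℕ) (T : ℕ → ℕ → Multiset ℕ) : Prop :=
  (∀ r c, InShape sh r c → T r c ≠ 0) ∧
  (∀ r c, ¬ InShape sh r c → T r c = 0) ∧
  (∀ r c, ∀ x ∈ T r c, 1 ≤ x ∧ x ≤ n) ∧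
  (∀ r c, InShape sh r (c + 1) → ∀ x ∈ T r c, ∀ y ∈ T r (c + 1), x ≤ y) ∧
  (∀ r c, InShape sh (r + 1) c → ∀ x ∈ T r c, ∀ y ∈ T (r + 1) c, x < y)

/-- Number of boxes in column `c` of the shape `sh`. -/
def colHeight (sh : List ℕ) (c : ℕ) : ℕ := (sh.filter (fun p => decide (c < p))).length

/-- Sort a multiset increasingly into a list. -/
def msort (M : Multiset ℕ) : List ℕ := M.sort (· ≤ ·)

/-- Column reading word: the smallest entry of each box from bottom to top, then the
remaining entries of each box, smallest to largest, boxes top to bottom. -/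
def colWord (sh : List ℕ) (T : ℕ → ℕ → Multiset ℕ) (c : ℕ) : List ℕ :=
  ((List.range (colHeight sh c)).reverse.map (fun r => (msort (T r c)).take 1)).flatten
    ++ ((List.range (colHeight sh c)).map (fun r => (msort (T r c)).drop 1)).flatten

/-- The boxes corresponding to the letters of `colWord`, in order. -/
def colBoxes (sh : List ℕ) (T : ℕ → ℕ → Multiset ℕ) (c : ℕ) : List (ℕ × ℕ) :=
  ((List.range (colHeight sh c)).reverse.map
      (fun r => ((msort (T r c)).take 1).map (fun _ => (r, c)))).flatten
    ++ ((List.range (colHeight sh c)).map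
      (fun r => ((msort (T r c)).drop 1).map (fun _ => (r, c)))).flatten

/-- The reading word of a multiset-valued tableau: column reading words, columns left to right. -/
def mvtWord (sh : List ℕ) (T : ℕ → ℕ → Multiset ℕ) : List ℕ :=
  ((List.range (sh.headD 0)).map (colWord sh T)).flatten

/-- The boxes corresponding to the letters of `mvtWord`, in order. -/
def mvtBoxes (sh : List ℕ) (T : ℕ → ℕ → Multiset ℕ) : List (ℕ × ℕ) :=
  ((List.range (sh.headD 0)).map (colBoxes sh T)).flatten

/-- The crystal operator `f_i` on multiset-valued tableaux: act on the box `b` of the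
rightmost uncanceled `+`; if the box below `b` contains an `i+1`, move the `i` from `b`
to an `i+1` in that box, otherwise replace the `i` in `b` by an `i+1`. -/
def mvtF (sh : List ℕ) (i : ℕ) (T : ℕ → ℕ → Multiset ℕ) :
    Option (ℕ → ℕ → Multiset ℕ) :=
  (fPos i (mvtWord sh T)).map (fun j =>
    let rc := (mvtBoxes sh T).getD j (0, 0)
    let r := rc.1
    let c := rc.2
    if (i + 1) ∈ T (r + 1) c then
      fun r' c' =>
        if r' = r ∧ c' = c then T r c - {i}
        else if r' = r + 1 ∧ c' = c then T (r + 1) c + {i + 1}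
        else T r' c'
    else
      fun r' c' => if r' = r ∧ c' = c then (T r c - {i}) + {i + 1} else T r' c')

/-- The crystal operator `e_i` on multiset-valued tableaux: act on the box `b` of the
leftmost uncanceled `-`; if the box above `b` contains an `i`, move the `i+1` from `b`
to an `i` in that box, otherwise replace the `i+1` in `b` by an `i`. -/
def mvtE (sh : List ℕ) (i : ℕ) (T : ℕ → ℕ → Multiset ℕ) :
    Option (ℕ → ℕ → Multiset ℕ) :=
  (ePos i (mvtWord sh T)).map (fun j =>
    let rc := (mvtBoxes sh T).getD j (0, 0)
    let r := rc.1
    let c := rc.2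
    if 0 < r ∧ i ∈ T (r - 1) c then
      fun r' c' =>
        if r' = r ∧ c' = c then T r c - {i + 1}
        else if r' = r - 1 ∧ c' = c then T (r - 1) c + {i}
        else T r' c'
    else
      fun r' c' => if r' = r ∧ c' = c then (T r c - {i + 1}) + {i} else T r' c')

/-- A multiset-valued tableau is highest weight if it is killed by all raising operators. -/
def MvtHW (sh : List ℕ) (T : ℕ → ℕ → Multiset ℕ) : Prop :=
  ∀ i, 1 ≤ i → mvtE sh i T = none
/-- msort basics -/
lemma msort_sorted (M : Multiset ℕ) : (msort M).Pairwise (· ≤ ·) := Multiset.pairwise_sort ..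

lemma mem_msort {M : Multiset ℕ} {x : ℕ} : x ∈ msort M ↔ x ∈ M := Multiset.mem_sort _

lemma coe_msort (M : Multiset ℕ) : (↑(msort M) : Multiset ℕ) = M := Multiset.sort_eq _ _

lemma msort_eq {M : Multiset ℕ} {l : List ℕ} (h : (↑l : Multiset ℕ) = M)
    (hs : l.Pairwise (· ≤ ·)) : msort M = l := by
  refine List.Perm.eq_of_pairwise' (msort_sorted M) hs ?_
  rw [← Multiset.coe_eq_coe, coe_msort, h]

/-- split a sorted list at the last occurrence of i -/
lemma sorted_split_last : ∀ (s : List ℕ), s.Pairwise (· ≤ ·) → ∀ i, i ∈ s →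
    ∃ A B, s = A ++ i :: B ∧ (∀ x ∈ A, x ≤ i) ∧ (∀ x ∈ B, i < x)
  | [], _, i, hm => by simp at hm
  | a :: rest, hs, i, hm => by
    rw [List.pairwise_cons] at hs
    by_cases hr : i ∈ rest
    · obtain ⟨A, B, h1, h2, h3⟩ := sorted_split_last rest hs.2 i hr
      refine ⟨a :: A, B, by simp [h1], ?_, h3⟩
      intro x hx
      rcases List.mem_cons.1 hx with rfl | hx'
      · exact hs.1 i hr
      · exact h2 x hx'
    · have ha : a = i := by rcases List.mem_cons.1 hm with h | h; omega; exact absurd h hr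
      subst ha
      exact ⟨[], rest, rfl, by simp, fun x hx => lt_of_le_of_ne (hs.1 x hx) (fun h => hr (h ▸ hx))⟩

/-- sigFold second component stays 0 when extending by letters ≠ i+1 -/
lemma sigFold_snd_zero_append (i : ℕ) (u v : List ℕ) (hu : (sigFold i u).2 = 0)
    (hv : ∀ x ∈ v, x ≠ i + 1) : (sigFold i (u ++ v)).2 = 0 := by
  unfold sigFold at *
  rw [List.foldl_append]
  revert hv
  generalize (List.foldl _ ((0,0) : ℕ × ℕ) u) = st at hu ⊢
  intro hv
  induction v generalizing st with
  | nil => simpa using hu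
  | cons a t ih =>
    simp only [List.foldl_cons]
    have ha : a ≠ i + 1 := hv a (by simp)
    have hv' : ∀ x ∈ t, x ≠ i + 1 := fun x hx => hv x (List.mem_cons_of_mem _ hx)
    by_cases h1 : a = i
    · apply ih _ (by simp [h1, hu]) hv'
    · apply ih _ (by simp [h1, ha, hu]) hv'

lemma sigFold_snd_append_succ (i : ℕ) (u : List ℕ) :
    (sigFold i (u ++ [i+1])).2 = (sigFold i u).2 + 1 := by
  unfold sigFold
  rw [List.foldl_append]
  simp

/-- extraction from fPos -/
lemma fPos_spec {i : ℕ} {w : List ℕ} {j : ℕ} (h : fPos i w = some j) :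
    j < w.length ∧ w[j]? = some i ∧ (sigFold i (w.take j)).2 = 0 ∧
    ∀ k, k < w.length → w[k]? = some i → (sigFold i (w.take k)).2 = 0 → k ≤ j := by
  unfold fPos at h
  have hj : j ∈ (List.range w.length).filter
      (fun j => decide (w[j]? = some i ∧ (sigFold i (w.take j)).2 = 0)) := by
    rcases List.getLast?_eq_some_iff.1 h with ⟨ys, hys⟩
    rw [hys]; simp
  have hmem := List.mem_filter.1 hj
  have h1 := List.mem_range.1 hmem.1
  have h2 := of_decide_eq_true hmem.2
  refine ⟨h1, h2.1, h2.2, fun k hk hk1 hk2 => ?_⟩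
  -- maximality: the filtered list is pairwise <
  have hpw : ((List.range w.length).filter
      (fun j => decide (w[j]? = some i ∧ (sigFold i (w.take j)).2 = 0))).Pairwise (· < ·) :=
    List.pairwise_lt_range.filter _
  have hkmem : k ∈ (List.range w.length).filter
      (fun j => decide (w[j]? = some i ∧ (sigFold i (w.take j)).2 = 0)) := by
    rw [List.mem_filter]
    exact ⟨List.mem_range.2 hk, decide_eq_true (by exact ⟨hk1, hk2⟩)⟩
  rcases List.getLast?_eq_some_iff.1 h with ⟨ys, hys⟩
  rw [hys] at hkmem hpw
  rcases List.mem_append.1 hkmem with hk' | hk'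
  · have := (List.pairwise_append.1 hpw).2.2 k hk' j (by simp)
    omega
  · simp at hk'; omega

/-- For a weakly decreasing list, row `r` has a box in column `c` iff `r < colHeight`. -/
lemma colHeight_iff {lam : List ℕ} (hs : lam.Pairwise (· ≥ ·)) (c r : ℕ) :
    r < colHeight lam c ↔ c < lam.getD r 0 := by
  induction lam generalizing r with
  | nil => simp [colHeight]
  | cons a l ih =>
    rw [List.pairwise_cons] at hs
    by_cases hca : c < a
    · have hfc : (a :: l).filter (fun p => decide (c < p)) = a :: l.filter (fun p => decide (c < p)) := by
        rw [List.filter_cons, if_pos (by simpa using hca)]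
      cases r with
      | zero => simp [colHeight, hfc, hca]
      | succ r =>
        have h2 := ih hs.2 (r := r)
        simp only [colHeight, hfc, List.length_cons, List.getD_cons_succ] at *
        omega
    · have hfl : (l.filter (fun p => decide (c < p))) = [] := by
        apply List.filter_eq_nil_iff.2
        intro b hb
        have := hs.1 b hb
        simp; omega
      have hfc : (a :: l).filter (fun p => decide (c < p)) = [] := by
        rw [List.filter_cons, if_neg (by simpa using hca), hfl]
      cases r with
      | zero => simp [colHeight, hfc, List.getD_cons_zero]; omega
      | succ r =>
        simp only [colHeight, hfc, List.length_nil, List.getD_cons_succ]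
        constructor
        · omega
        · intro h
          exfalso
          rcases lt_or_ge r l.length with h1 | h1
          · have hm : l.getD r 0 ∈ l := by
              rw [List.getD_eq_getElem _ _ h1]; exact List.getElem_mem _
            have := hs.1 _ hm
            omega
          · rw [List.getD_eq_default _ _ h1] at h; omega

lemma inShape_iff {lam : List ℕ} (hs : lam.Pairwise (· ≥ ·)) (r c : ℕ) :
    InShape lam r c ↔ r < colHeight lam c := (colHeight_iff hs c r).symm

/-- entries strictly increase down columns, transitively -/
lemma col_chain {n : ℕ} {lam : List ℕ} (hlam : IsPartition lam)
    {T : ℕ → ℕ → Multiset ℕ} (hT : IsMVT n lam T) (c : ℕ) :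
    ∀ r2, InShape lam r2 c → ∀ r1 < r2, ∀ x ∈ T r1 c, ∀ y ∈ T r2 c, x < y := by
  intro r2
  induction r2 with
  | zero => omega
  | succ r2 ih =>
    intro hsh r1 hr12 x hx y hy
    have hsh2 : InShape lam r2 c := by
      rw [inShape_iff hlam.1] at *
      omega
    rcases Nat.lt_or_ge r1 r2 with h | h
    · obtain ⟨z, hz⟩ := Multiset.exists_mem_of_ne_zero (hT.1 r2 c hsh2)
      exact lt_trans (ih hsh2 r1 h x hx z hz) (hT.2.2.2.2 r2 c hsh z hz y hy)
    · have : r1 = r2 := by omega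
      subst this
      exact hT.2.2.2.2 r1 c hsh x hx y hy

/-! Pairs: letters tagged with their boxes. -/

def bpiece (rc : ℕ × ℕ) (l : List ℕ) : List (ℕ × ℕ × ℕ) := l.map (fun x => (x, rc))

def mpc (T : ℕ → ℕ → Multiset ℕ) (c r : ℕ) : List (ℕ × ℕ × ℕ) :=
  bpiece (r, c) ((msort (T r c)).take 1)

def dpc (T : ℕ → ℕ → Multiset ℕ) (c r : ℕ) : List (ℕ × ℕ × ℕ) :=
  bpiece (r, c) ((msort (T r c)).drop 1)

def colPairs (sh : List ℕ) (T : ℕ → ℕ → Multiset ℕ) (c : ℕ) : List (ℕ × ℕ × ℕ) :=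
  ((List.range (colHeight sh c)).reverse.map (mpc T c)).flatten
    ++ ((List.range (colHeight sh c)).map (dpc T c)).flatten

def mvtPairs (sh : List ℕ) (T : ℕ → ℕ → Multiset ℕ) : List (ℕ × ℕ × ℕ) :=
  ((List.range (sh.headD 0)).map (colPairs sh T)).flatten

lemma map_fst_bpiece (rc : ℕ × ℕ) (l : List ℕ) : (bpiece rc l).map (·.1) = l := by
  simp [bpiece, List.map_map, Function.comp_def]

lemma map_snd_bpiece (rc : ℕ × ℕ) (l : List ℕ) :
    (bpiece rc l).map (·.2) = l.map (fun _ => rc) := by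
  simp [bpiece, List.map_map, Function.comp_def]

lemma map_fst_mvtPairs (sh : List ℕ) (T : ℕ → ℕ → Multiset ℕ) :
    (mvtPairs sh T).map (·.1) = mvtWord sh T := by
  simp only [mvtPairs, mvtWord, List.map_flatten, List.map_map]
  congr 1
  apply List.map_congr_left
  intro c _
  simp only [Function.comp_def, colPairs, colWord, List.map_append, List.map_flatten,
    List.map_map]
  congr 2 <;>
  · apply List.map_congr_left
    intro r _
    simp [mpc, dpc, bpiece, List.map_map, Function.comp_def]

lemma map_snd_mvtPairs (sh : List ℕ) (T : ℕ → ℕ → Multiset ℕ) :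
    (mvtPairs sh T).map (·.2) = mvtBoxes sh T := by
  simp only [mvtPairs, mvtBoxes, List.map_flatten, List.map_map]
  congr 1
  apply List.map_congr_left
  intro c _
  simp only [Function.comp_def, colPairs, colBoxes, List.map_append, List.map_flatten,
    List.map_map]
  congr 2 <;>
  · apply List.map_congr_left
    intro r _
    simp [mpc, dpc, bpiece, List.map_map, Function.comp_def]

/-- every pair's letter belongs to the multiset of its box, which is in the diagram -/
lemma memPairs {sh : List ℕ} {T : ℕ → ℕ → Multiset ℕ} {z : ℕ × ℕ × ℕ}
    (h : z ∈ mvtPairs sh T) :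
    z.2.2 < sh.headD 0 ∧ z.2.1 < colHeight sh z.2.2 ∧ z.1 ∈ T z.2.1 z.2.2 := by
  simp only [mvtPairs, List.mem_flatten, List.mem_map] at h
  obtain ⟨L, ⟨c, hc, rfl⟩, hzL⟩ := h
  rw [List.mem_range] at hc
  rcases List.mem_append.1 hzL with hz | hz <;>
  · simp only [List.mem_flatten, List.mem_map, List.mem_reverse] at hz
    obtain ⟨L', ⟨r, hr, rfl⟩, hzL'⟩ := hz
    rw [List.mem_range] at hr
    simp only [mpc, dpc, bpiece, List.mem_map] at hzL'
    obtain ⟨x, hx, rfl⟩ := hzL'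
    refine ⟨hc, hr, ?_⟩
    first
    | exact mem_msort.1 (List.mem_of_mem_take hx)
    | exact mem_msort.1 (List.drop_subset _ _ hx)

lemma range_split {k n : ℕ} (h : k < n) :
    List.range n = List.range k ++ k :: (List.range (n-k-1)).map (fun t => k+1+t) := by
  have h2 : n = k + (1 + (n - k - 1)) := by omega
  conv_lhs => rw [h2, List.range_add, List.range_add]
  rw [List.map_append, List.map_map]
  have : List.range 1 = [0] := rfl
  rw [this]
  simp [Function.comp_def, Nat.add_assoc]

lemma flatten_split {α : Type*} (f : ℕ → List α) {k n : ℕ} (h : k < n) :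
    ((List.range n).map f).flatten =
      ((List.range k).map f).flatten ++ f k
        ++ ((List.range (n-k-1)).map (fun t => f (k+1+t))).flatten := by
  rw [range_split h]
  simp [List.map_map, Function.comp_def, List.append_assoc]

lemma flatten_split_rev {α : Type*} (f : ℕ → List α) {k n : ℕ} (h : k < n) :
    ((List.range n).reverse.map f).flatten =
      (((List.range (n-k-1)).map (fun t => f (k+1+t))).reverse).flatten ++ f k
        ++ ((List.range k).reverse.map f).flatten := by
  rw [range_split h]
  simp [List.map_map, List.reverse_append, Function.comp_def, List.append_assoc, List.map_reverse]

lemma mem_of_getElem?' {α : Type*} {l : List α} {n : ℕ} {a : α} (h : l[n]? = some a) :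
    a ∈ l := by
  obtain ⟨hlt, rfl⟩ := List.getElem?_eq_some_iff.mp h
  exact List.getElem_mem hlt

lemma set_mid {α : Type*} (u v : List α) (a b : α) :
    (u ++ a :: v).set u.length b = u ++ b :: v := by
  induction u with
  | nil => rfl
  | cons x u ih => simp [List.set_cons_succ, ih]

lemma bpiece_append (rc : ℕ × ℕ) (l l' : List ℕ) :
    bpiece rc (l ++ l') = bpiece rc l ++ bpiece rc l' := by simp [bpiece]

lemma bpiece_cons (rc : ℕ × ℕ) (x : ℕ) (l : List ℕ) :
    bpiece rc (x :: l) = (x, rc) :: bpiece rc l := by simp [bpiece]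

lemma mem_bpiece {rc : ℕ × ℕ} {l : List ℕ} {z : ℕ × ℕ × ℕ} (h : z ∈ bpiece rc l) :
    z.2 = rc ∧ z.1 ∈ l := by
  simp only [bpiece, List.mem_map] at h
  obtain ⟨x, hx, rfl⟩ := h
  exact ⟨rfl, hx⟩

lemma snd_mem_colPairs {sh : List ℕ} {T : ℕ → ℕ → Multiset ℕ} {c : ℕ} {z : ℕ × ℕ × ℕ}
    (h : z ∈ colPairs sh T c) : z.2.2 = c := by
  rcases List.mem_append.1 h with h' | h' <;>
  · simp only [List.mem_flatten, List.mem_map, List.mem_reverse] at h'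
    obtain ⟨L, ⟨r, _, rfl⟩, hz⟩ := h'
    have := (mem_bpiece hz).1
    rw [this]

lemma colPairs_congr {sh : List ℕ} {T T₂ : ℕ → ℕ → Multiset ℕ} {c : ℕ}
    (h : ∀ r, T r c = T₂ r c) : colPairs sh T c = colPairs sh T₂ c := by
  unfold colPairs mpc dpc
  congr 2 <;> (apply List.map_congr_left; intro r _; rw [h r])

lemma mpc_congr {T T₂ : ℕ → ℕ → Multiset ℕ} {c r : ℕ} (h : T r c = T₂ r c) :
    mpc T c r = mpc T₂ c r := by unfold mpc; rw [h]

lemma dpc_congr {T T₂ : ℕ → ℕ → Multiset ℕ} {c r : ℕ} (h : T r c = T₂ r c) :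
    dpc T c r = dpc T₂ c r := by unfold dpc; rw [h]

/-- Locating `fPos` inside a structured decomposition of the pairs list. -/
lemma fpos_locate {i : ℕ} {pairs U₀ U₁ V : List (ℕ × ℕ × ℕ)} {rc : ℕ × ℕ} {j : ℕ}
    (hsplit : pairs = U₀ ++ U₁ ++ (i, rc) :: V)
    (ha : (i, rc) ∉ U₀) (hb : ∀ z ∈ U₁, z.1 ≤ i) (hcV : (i, rc) ∉ V)
    (hz : pairs[j]? = some (i, rc))
    (hjsig : (sigFold i ((pairs.map (·.1)).take j)).2 = 0)
    (hjmax : ∀ k, k < (pairs.map (·.1)).length → (pairs.map (·.1))[k]? = some i →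
      (sigFold i ((pairs.map (·.1)).take k)).2 = 0 → k ≤ j) :
    j = U₀.length + U₁.length := by
  set U : List (ℕ × ℕ × ℕ) := U₀ ++ U₁ with hU
  set p := U.length with hp
  have hsplit' : pairs = U ++ (i, rc) :: V := by rw [hsplit, hU, List.append_assoc]
  set w := pairs.map (·.1) with hw
  have hwsplit : w = U.map (·.1) ++ i :: V.map (·.1) := by
    rw [hw, hsplit', List.map_append, List.map_cons]
  have hlenU : (U.map (·.1)).length = p := by simp [hp]
  -- j ≤ p
  have hjp : j ≤ p := by
    by_contra hlt
    push_neg at hlt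
    have : pairs[j]? = ((i, rc) :: V)[j - p]? := by
      rw [hsplit', List.getElem?_append_right (by omega)]
    rw [hz] at this
    rw [List.getElem?_cons, if_neg (show ¬ (j - p = 0) by omega)] at this
    exact hcV (mem_of_getElem?' this.symm)
  -- |U₀| ≤ j
  have hU0j : U₀.length ≤ j := by
    by_contra hlt
    push_neg at hlt
    have h1 : pairs[j]? = U₀[j]? := by
      rw [hsplit, List.append_assoc, List.getElem?_append_left (by omega)]
    rw [hz] at h1
    exact ha (mem_of_getElem?' h1.symm)
  -- candidacy of p
  have hplen : p < w.length := by rw [hwsplit]; simp [hp]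
  have hpget : w[p]? = some i := by
    rw [hwsplit, List.getElem?_append_right (by omega)]
    simp [hlenU]
  have hpsig : (sigFold i (w.take p)).2 = 0 := by
    have htp : w.take p = U.map (·.1) := by
      rw [hwsplit, ← hlenU, List.take_left]
    have htj : w.take j = (U.map (·.1)).take j := by
      rw [hwsplit]
      exact List.take_append_of_le_length (by omega)
    have hdec : w.take p = w.take j ++ (U.map (·.1)).drop j := by
      rw [htp, htj, List.take_append_drop]
    rw [hdec]
    apply sigFold_snd_zero_append _ _ _ hjsig
    intro x hx
    rw [← List.map_drop] at hx
    obtain ⟨zz, hzz, rfl⟩ := List.mem_map.1 hx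
    have hzz2 : zz ∈ U₁ := by
      have h1 : U₁.drop (j - U₀.length) = U.drop j := by
        conv_lhs => rw [← List.drop_left (l₁ := U₀) (l₂ := U₁)]
        rw [List.drop_drop]
        congr 1
        omega
      rw [← h1] at hzz
      exact List.drop_subset _ _ hzz
    have := hb zz hzz2
    omega
  have := hjmax p hplen hpget hpsig
  have : j = p := by omega
  rw [this, hp, hU]
  simp

def U0part (lam : List ℕ) (T : ℕ → ℕ → Multiset ℕ) (c r : ℕ) : List (ℕ × ℕ × ℕ) :=
  ((List.range c).map (colPairs lam T)).flatten
    ++ (((List.range (colHeight lam c - r - 1)).map (fun t => mpc T c (r+1+t))).reverse).flatten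

def U1part (lam : List ℕ) (T : ℕ → ℕ → Multiset ℕ) (c r : ℕ) : List (ℕ × ℕ × ℕ) :=
  mpc T c r ++ ((List.range r).reverse.map (mpc T c)).flatten
    ++ ((List.range r).map (dpc T c)).flatten

def Vpart (lam : List ℕ) (T : ℕ → ℕ → Multiset ℕ) (c r : ℕ) : List (ℕ × ℕ × ℕ) :=
  ((List.range (colHeight lam c - r - 1)).map (fun t => dpc T c (r+1+t))).flatten
    ++ ((List.range (lam.headD 0 - c - 1)).map (fun t => colPairs lam T (c+1+t))).flatten

lemma mvtPairs_split {lam : List ℕ} (T : ℕ → ℕ → Multiset ℕ) {c r : ℕ}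
    (hc : c < lam.headD 0) (hr : r < colHeight lam c) :
    mvtPairs lam T = U0part lam T c r ++ (U1part lam T c r ++ dpc T c r ++ Vpart lam T c r) := by
  unfold mvtPairs
  rw [flatten_split (colPairs lam T) hc]
  have hcol : colPairs lam T c =
      (((List.range (colHeight lam c - r - 1)).map (fun t => mpc T c (r+1+t))).reverse).flatten
        ++ mpc T c r ++ ((List.range r).reverse.map (mpc T c)).flatten
        ++ (((List.range r).map (dpc T c)).flatten ++ dpc T c r
          ++ ((List.range (colHeight lam c - r - 1)).map (fun t => dpc T c (r+1+t))).flatten) := by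
    unfold colPairs
    rw [flatten_split_rev (mpc T c) hr, flatten_split (dpc T c) hr]
  rw [hcol]
  unfold U0part U1part Vpart
  simp only [List.append_assoc]

/-- members of U0part have box ≠ (r,c) -/
lemma U0part_not_mem {lam : List ℕ} {T : ℕ → ℕ → Multiset ℕ} {c r : ℕ} {z : ℕ × ℕ × ℕ}
    (h : z ∈ U0part lam T c r) : z.2 ≠ (r, c) := by
  rcases List.mem_append.1 h with h' | h'
  · simp only [List.mem_flatten, List.mem_map] at h'
    obtain ⟨L, ⟨c', hc', rfl⟩, hz⟩ := h'
    have := snd_mem_colPairs hz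
    rw [List.mem_range] at hc'
    intro he
    rw [he] at this
    simp at this
    omega
  · simp only [List.mem_flatten, List.mem_reverse, List.mem_map] at h'
    obtain ⟨L, ⟨t, _, rfl⟩, hz⟩ := h'
    have := (mem_bpiece hz).1
    intro he
    rw [he] at this
    have : r = r + 1 + t := by
      have := congrArg Prod.fst this
      simpa using this
    omega

/-- members of Vpart have box ≠ (r,c) -/
lemma Vpart_not_mem {lam : List ℕ} {T : ℕ → ℕ → Multiset ℕ} {c r : ℕ} {z : ℕ × ℕ × ℕ}
    (h : z ∈ Vpart lam T c r) : z.2 ≠ (r, c) := by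
  rcases List.mem_append.1 h with h' | h'
  · simp only [List.mem_flatten, List.mem_map] at h'
    obtain ⟨L, ⟨t, _, rfl⟩, hz⟩ := h'
    have := (mem_bpiece hz).1
    intro he
    rw [he] at this
    have : r = r + 1 + t := by
      have := congrArg Prod.fst this
      simpa using this
    omega
  · simp only [List.mem_flatten, List.mem_map] at h'
    obtain ⟨L, ⟨t, _, rfl⟩, rlz⟩ := h'
    have := snd_mem_colPairs rlz
    intro he
    rw [he] at this
    simp at this
    omega

/-- members of U1part other than those from the box (r,c) itself have small letters -/
lemma U1part_le {n : ℕ} {lam : List ℕ} (hlam : IsPartition lam)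
    {T : ℕ → ℕ → Multiset ℕ} (hT : IsMVT n lam T) {c r i : ℕ}
    (hrH : r < colHeight lam c) (hiT : i ∈ T r c)
    (hA : ∀ x ∈ (msort (T r c)).take 1, x ≤ i) {z : ℕ × ℕ × ℕ}
    (h : z ∈ U1part lam T c r) : z.1 ≤ i := by
  have hsh : InShape lam r c := (inShape_iff hlam.1 r c).2 hrH
  rcases List.mem_append.1 h with h' | h'
  · rcases List.mem_append.1 h' with h'' | h''
    · exact hA _ (mem_bpiece h'').2
    · simp only [List.mem_flatten, List.mem_reverse, List.mem_map] at h''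
      obtain ⟨L, ⟨r', hr', rfl⟩, hz⟩ := h''
      rw [List.mem_range] at hr'
      have hmem : z.1 ∈ T r' c := mem_msort.1 (List.mem_of_mem_take (mem_bpiece hz).2)
      exact le_of_lt (col_chain hlam hT c r hsh r' hr' z.1 hmem i hiT)
  · simp only [List.mem_flatten, List.mem_map] at h'
    obtain ⟨L, ⟨r', hr', rfl⟩, hz⟩ := h'
    rw [List.mem_range] at hr'
    have hmem : z.1 ∈ T r' c := mem_msort.1 (List.drop_subset _ _ (mem_bpiece hz).2)
    exact le_of_lt (col_chain hlam hT c r hsh r' hr' z.1 hmem i hiT)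

lemma lowmin_not_mem {T : ℕ → ℕ → Multiset ℕ} {c r : ℕ} {z : ℕ × ℕ × ℕ}
    (h : z ∈ ((List.range r).reverse.map (mpc T c)).flatten) : z.2 ≠ (r, c) := by
  simp only [List.mem_flatten, List.mem_map, List.mem_reverse] at h
  obtain ⟨L, ⟨r', hr', rfl⟩, hz⟩ := h
  rw [List.mem_range] at hr'
  have := (mem_bpiece hz).1
  intro he
  rw [he] at this
  have : r = r' := by have := congrArg Prod.fst this; simpa using this
  omega

lemma lowdrop_not_mem {T : ℕ → ℕ → Multiset ℕ} {c r : ℕ} {z : ℕ × ℕ × ℕ}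
    (h : z ∈ ((List.range r).map (dpc T c)).flatten) : z.2 ≠ (r, c) := by
  simp only [List.mem_flatten, List.mem_map] at h
  obtain ⟨L, ⟨r', hr', rfl⟩, hz⟩ := h
  rw [List.mem_range] at hr'
  have := (mem_bpiece hz).1
  intro he
  rw [he] at this
  have : r = r' := by have := congrArg Prod.fst this; simpa using this
  omega

lemma sorted_mid_replace {A B : List ℕ} {i k : ℕ} (hAB : (A ++ i :: B).Pairwise (· ≤ ·))
    (hA : ∀ x ∈ A, x ≤ k) (hk : ∀ x ∈ B, k ≤ x) : (A ++ k :: B).Pairwise (· ≤ ·) := by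
  rw [List.pairwise_append] at hAB ⊢
  refine ⟨hAB.1, ?_, ?_⟩
  · rw [List.pairwise_cons] at *
    exact ⟨hk, hAB.2.1.2⟩
  · intro a ha b hb
    rcases List.mem_cons.1 hb with rfl | hb'
    · exact hA a ha
    · exact hAB.2.2 a ha b (List.mem_cons_of_mem _ hb')

lemma coe_append_cons (A : List ℕ) (i : ℕ) (B : List ℕ) :
    (↑(A ++ i :: B) : Multiset ℕ) = ↑A + (i ::ₘ ↑B) := rfl

/-- replacing the last `i` by `i+1`, sorted version (Case B surgery) -/
lemma msort_caseB {M : Multiset ℕ} {A B : List ℕ} {i : ℕ} (hs : msort M = A ++ i :: B)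
    (hA : ∀ x ∈ A, x ≤ i) (hB : ∀ x ∈ B, i < x) :
    msort (M - {i} + {i+1}) = A ++ (i+1) :: B := by
  have hM : (↑(A ++ i :: B) : Multiset ℕ) = M := by rw [← hs, coe_msort]
  apply msort_eq
  · rw [coe_append_cons, ← hM, coe_append_cons, Multiset.sub_singleton]
    rw [show (↑A + (i ::ₘ ↑B) : Multiset ℕ).erase i = ↑A + ↑B by
      rw [Multiset.erase_add_right_pos _ (by simp)]
      simp]
    rw [show ((i+1) ::ₘ (↑B : Multiset ℕ)) = {i+1} + ↑B from (Multiset.singleton_add _ _).symm]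
    rw [add_assoc, add_comm ({i+1} : Multiset ℕ) ↑B, ← add_assoc]
  · exact sorted_mid_replace (hs ▸ msort_sorted M) (fun x hx => le_trans (hA x hx) (by omega))
      (fun x hx => by have := hB x hx; omega)

/-- removing the final `i` (Case A surgery at box (r,c)) -/
lemma msort_caseA_rem {M : Multiset ℕ} {A : List ℕ} {i : ℕ} (hs : msort M = A ++ [i]) :
    msort (M - {i}) = A := by
  have hM : (↑(A ++ i :: ([] : List ℕ)) : Multiset ℕ) = M := by rw [← hs, coe_msort]
  apply msort_eq
  · rw [← hM, coe_append_cons, Multiset.sub_singleton,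
      Multiset.erase_add_right_pos _ (by simp)]
    simp
  · have := hs ▸ msort_sorted M
    rw [List.pairwise_append] at this
    exact this.1

/-- adding an `i+1` to a multiset all of whose elements are ≥ i+1 (Case A at box (r+1,c)) -/
lemma msort_caseA_add {N : Multiset ℕ} {i : ℕ} (hN : ∀ y ∈ N, i + 1 ≤ y) :
    msort (N + {i+1}) = (i+1) :: msort N := by
  apply msort_eq
  · rw [show (↑((i+1) :: msort N) : Multiset ℕ) = (i+1) ::ₘ ↑(msort N) from rfl, coe_msort,
      show ((i+1) ::ₘ N) = {i+1} + N from (Multiset.singleton_add _ _).symm, add_comm]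
  · rw [List.pairwise_cons]
    exact ⟨fun y hy => hN y (mem_msort.1 hy), msort_sorted N⟩

lemma U0part_congr {lam : List ℕ} {T T₂ : ℕ → ℕ → Multiset ℕ} {c r : ℕ}
    (h1 : ∀ c' < c, ∀ r', T₂ r' c' = T r' c')
    (h2 : ∀ t, mpc T₂ c (r+1+t) = mpc T c (r+1+t)) :
    U0part lam T₂ c r = U0part lam T c r := by
  unfold U0part
  congr 1
  · congr 1
    apply List.map_congr_left
    intro c' hc'
    exact colPairs_congr (fun r' => h1 c' (List.mem_range.1 hc') r')
  · congr 2
    exact List.map_congr_left (fun t _ => h2 t)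

lemma U1part_congr {lam : List ℕ} {T T₂ : ℕ → ℕ → Multiset ℕ} {c r : ℕ}
    (hm : mpc T₂ c r = mpc T c r) (h2 : ∀ r' < r, T₂ r' c = T r' c) :
    U1part lam T₂ c r = U1part lam T c r := by
  unfold U1part
  congr 1
  · rw [hm]
    congr 2
    exact List.map_congr_left (fun r' hr' => mpc_congr (h2 r' (List.mem_range.1 (List.mem_reverse.1 hr'))))
  · congr 1
    exact List.map_congr_left (fun r' hr' => dpc_congr (h2 r' (List.mem_range.1 hr')))

lemma Vpart_congr {lam : List ℕ} {T T₂ : ℕ → ℕ → Multiset ℕ} {c r : ℕ}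
    (h2 : ∀ t, dpc T₂ c (r+1+t) = dpc T c (r+1+t))
    (h3 : ∀ c', c < c' → ∀ r', T₂ r' c' = T r' c') :
    Vpart lam T₂ c r = Vpart lam T c r := by
  unfold Vpart
  congr 1
  · congr 1
    exact List.map_congr_left (fun t _ => h2 t)
  · congr 1
    apply List.map_congr_left
    intro t _
    exact colPairs_congr (fun r' => h3 (c+1+t) (by omega) r')

/-- If `T` is a multiset-valued tableau of shape `λ` with entries at most
`n` and `f_i T ≠ 0`, then the reading word of `f_i T` is `f_i` applied to the reading word
of `T`: the changed letter does not move in the reading word. -/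
theorem mvt_reading_word_commutes_with_f
    (n : ℕ) (lam : List ℕ) (hlam : IsPartition lam)
    (T : ℕ → ℕ → Multiset ℕ) (hT : IsMVT n lam T)
    (i : ℕ) (hi : 1 ≤ i)
    (T' : ℕ → ℕ → Multiset ℕ) (hf : mvtF lam i T = some T') :
    some (mvtWord lam T') = fWord i (mvtWord lam T) := by
  unfold mvtF at hf
  rw [Option.map_eq_some_iff] at hf
  obtain ⟨j, hj, hTdef⟩ := hf
  rw [fWord, hj, Option.map_some]
  congr 1
  obtain ⟨hjlen, hjget, hjsig, hjmax⟩ := fPos_spec hj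
  have hwp : (mvtPairs lam T).map (·.1) = mvtWord lam T := map_fst_mvtPairs lam T
  have hlen : (mvtWord lam T).length = (mvtPairs lam T).length := by
    rw [← hwp]; simp
  have hjlen' : j < (mvtPairs lam T).length := by omega
  set z := (mvtPairs lam T)[j] with hzdef
  have hz? : (mvtPairs lam T)[j]? = some z := List.getElem?_eq_getElem hjlen'
  have hz1 : z.1 = i := by
    have h1 : (mvtWord lam T)[j]? = some z.1 := by
      rw [← hwp, List.getElem?_map, hz?]; rfl
    rw [hjget] at h1
    exact (Option.some.inj h1).symm
  have hrc : (mvtBoxes lam T).getD j (0,0) = z.2 := by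
    rw [← map_snd_mvtPairs]
    have hjb : j < ((mvtPairs lam T).map (fun x => x.2)).length := by simpa using hjlen'
    rw [List.getD_eq_getElem _ _ hjb, List.getElem_map]
  simp only [hrc] at hTdef
  set r := z.2.1 with hrdef
  set c := z.2.2 with hcdef
  have hzpair : z = (i, (r, c)) := by rw [← hz1]
  obtain ⟨hcW, hrH, hiT'⟩ := memPairs (mem_of_getElem?' hz?)
  have hiT : i ∈ T r c := hz1 ▸ hiT'
  have hshape_rc : InShape lam r c := (inShape_iff hlam.1 r c).2 hrH
  obtain ⟨A, B, hs, hA, hB⟩ :=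
    sorted_split_last _ (msort_sorted (T r c)) i (mem_msort.2 hiT)
  have hsplitT := mvtPairs_split (lam := lam) T hcW hrH
  have hzmid : (mvtPairs lam T)[j]? = some (i, (r, c)) := by rw [hz?, hzpair]
  have hjsig' : (sigFold i (((mvtPairs lam T).map (·.1)).take j)).2 = 0 := by
    rw [hwp]; exact hjsig
  have hjmax' : ∀ k, k < ((mvtPairs lam T).map (·.1)).length →
      ((mvtPairs lam T).map (·.1))[k]? = some i →
      (sigFold i (((mvtPairs lam T).map (·.1)).take k)).2 = 0 → k ≤ j := by
    rw [hwp]; exact hjmax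
  by_cases hcase : (i + 1) ∈ T (r + 1) c
  · -- Case A : move the i down into the box below
    rw [if_pos hcase] at hTdef
    have hT'eq : T' = fun r' c' =>
        if r' = r ∧ c' = c then T r c - {i}
        else if r' = r + 1 ∧ c' = c then T (r+1) c + {i+1} else T r' c' := hTdef.symm
    have hT'rc : T' r c = T r c - {i} := by rw [hT'eq]; simp
    have hT'r1c : T' (r+1) c = T (r+1) c + {i+1} := by rw [hT'eq]; simp
    have hTeq : ∀ r' c', ¬(r' = r ∧ c' = c) → ¬(r' = r+1 ∧ c' = c) → T' r' c' = T r' c' := by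
      intro r' c' h1 h2
      rw [hT'eq]
      simp only [if_neg h1, if_neg h2]
    have hshape1 : InShape lam (r+1) c := by
      by_contra h
      rw [hT.2.1 (r+1) c h] at hcase
      simp at hcase
    have hr1H : r + 1 < colHeight lam c := (inShape_iff hlam.1 _ _).1 hshape1
    have hadj : ∀ x ∈ T r c, ∀ y ∈ T (r+1) c, x < y := hT.2.2.2.2 r c hshape1
    have hBnil : B = [] := by
      rcases hBc : B with _ | ⟨b, B'⟩
      · rfl
      · exfalso
        have hbmem : b ∈ T r c := mem_msort.1 (by rw [hs, hBc]; simp)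
        have h1 := hadj b hbmem (i+1) hcase
        have h2 := hB b (by rw [hBc]; simp)
        omega
    subst hBnil
    have hNge : ∀ y ∈ T (r+1) c, i + 1 ≤ y := fun y hy => hadj i hiT y hy
    have htl : msort (T (r+1) c + {i+1}) = (i+1) :: msort (T (r+1) c) := msort_caseA_add hNge
    obtain ⟨tl2, htl2⟩ : ∃ tl2, msort (T (r+1) c) = (i+1) :: tl2 := by
      rcases hcons : msort (T (r+1) c) with _ | ⟨y, tl2⟩
      · exfalso
        have h0 : i + 1 ∈ msort (T (r+1) c) := mem_msort.2 hcase
        rw [hcons] at h0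
        simp at h0
      · refine ⟨tl2, ?_⟩
        have hy1 : i + 1 ≤ y := hNge y (mem_msort.1 (by rw [hcons]; simp))
        have hy2 : y ≤ i + 1 := by
          have hmem : i + 1 ∈ y :: tl2 := by rw [← hcons]; exact mem_msort.2 hcase
          rcases List.mem_cons.1 hmem with h | h
          · omega
          · have hsor := msort_sorted (T (r+1) c)
            rw [hcons, List.pairwise_cons] at hsor
            exact hsor.1 _ h
        have hy : y = i + 1 := by omega
        rw [← hy]
    have hU0split : U0part lam T c r = (((List.range c).map (colPairs lam T)).flatten
        ++ (((List.range (colHeight lam c - r - 1 - 1)).map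
            (fun t => mpc T c (r+1+(0+1+t)))).reverse).flatten) ++ mpc T c (r+1) := by
      unfold U0part
      rw [← List.map_reverse, flatten_split_rev _ (show 0 < colHeight lam c - r - 1 by omega)]
      simp only [Nat.add_zero, Nat.sub_zero, List.map_reverse, List.range_zero,
        List.reverse_nil, List.map_nil, List.flatten_nil, List.append_nil, List.append_assoc]
    have hmpcr1 : mpc T c (r+1) = [(i+1, (r+1, c))] := by
      unfold mpc
      rw [htl2]
      rfl
    cases A with
    | nil =>
      -- impossible: the i would be the single minimum of its box, directly
      -- preceded in the word by the i+1 below it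
      exfalso
      simp only [List.nil_append] at hs
      have htake : (msort (T r c)).take 1 = [i] := by rw [hs]; rfl
      have hdrop : (msort (T r c)).drop 1 = ([] : List ℕ) := by rw [hs]; rfl
      have hm : mpc T c r = [(i,(r,c))] := by
        unfold mpc
        rw [htake]
        rfl
      have hdnil : dpc T c r = ([] : List (ℕ × ℕ × ℕ)) := by
        unfold dpc
        rw [hdrop]
        rfl
      have hsplit2 : mvtPairs lam T =
          U0part lam T c r ++ ([] : List (ℕ × ℕ × ℕ)) ++ (i,(r,c)) ::
            (((List.range r).reverse.map (mpc T c)).flatten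
              ++ (((List.range r).map (dpc T c)).flatten ++ Vpart lam T c r)) := by
        rw [hsplitT, hdnil]
        unfold U1part
        rw [hm]
        simp only [List.append_assoc, List.cons_append, List.nil_append, List.append_nil]
        rfl
      have ha' : (i,(r,c)) ∉ U0part lam T c r := fun h => (U0part_not_mem h) rfl
      have hcV' : (i,(r,c)) ∉ (((List.range r).reverse.map (mpc T c)).flatten
              ++ (((List.range r).map (dpc T c)).flatten ++ Vpart lam T c r)) := by
        intro h
        rcases List.mem_append.1 h with h' | h'
        · exact lowmin_not_mem h' rfl
        rcases List.mem_append.1 h' with h'' | h''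
        · exact lowdrop_not_mem h'' rfl
        · exact Vpart_not_mem h'' rfl
      have hjval := fpos_locate hsplit2 ha' (by simp) hcV' hzmid hjsig' hjmax'
      -- compute the signature at position j and derive a contradiction
      have hwU0 : mvtWord lam T = (U0part lam T c r).map (·.1) ++ i ::
          ((((List.range r).reverse.map (mpc T c)).flatten
              ++ (((List.range r).map (dpc T c)).flatten ++ Vpart lam T c r)).map (·.1)) := by
        rw [← hwp, hsplit2]
        simp [List.map_append, List.append_assoc]
      have hjlen0 : j = ((U0part lam T c r).map (·.1)).length := by simp [hjval]
      have htakej : (mvtWord lam T).take j = (U0part lam T c r).map (·.1) := by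
        rw [hwU0, hjlen0, List.take_left]
      have hU0w : (U0part lam T c r).map (·.1) =
          ((((List.range c).map (colPairs lam T)).flatten
            ++ (((List.range (colHeight lam c - r - 1 - 1)).map
              (fun t => mpc T c (r+1+(0+1+t)))).reverse).flatten).map (·.1)) ++ [i+1] := by
        rw [hU0split, hmpcr1]
        simp [List.map_append]
      have := sigFold_snd_append_succ i ((((List.range c).map (colPairs lam T)).flatten
            ++ (((List.range (colHeight lam c - r - 1 - 1)).map
              (fun t => mpc T c (r+1+(0+1+t)))).reverse).flatten).map (·.1))
      rw [← hU0w, ← htakej] at this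
      rw [hjsig] at this
      simp at this
    | cons a A₂ =>
      have htake : (msort (T r c)).take 1 = [a] := by rw [hs]; rfl
      have hdrop : (msort (T r c)).drop 1 = A₂ ++ [i] := by rw [hs]; rfl
      have hd : dpc T c r = bpiece (r,c) A₂ ++ [(i,(r,c))] := by
        unfold dpc
        rw [hdrop, bpiece_append]
        rfl
      have hsplit2 : mvtPairs lam T =
          U0part lam T c r ++ (U1part lam T c r ++ bpiece (r,c) A₂) ++ (i,(r,c)) ::
            Vpart lam T c r := by
        rw [hsplitT, hd]
        simp only [List.append_assoc, List.cons_append, List.nil_append]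
        rfl
      have ha' : (i,(r,c)) ∉ U0part lam T c r := fun h => (U0part_not_mem h) rfl
      have hb' : ∀ z' ∈ U1part lam T c r ++ bpiece (r,c) A₂, z'.1 ≤ i := by
        intro z' hz'
        rcases List.mem_append.1 hz' with h' | h'
        · refine U1part_le hlam hT hrH hiT ?_ h'
          rw [htake]
          intro x hx
          rw [List.mem_singleton] at hx
          exact hA x (by rw [hx]; simp)
        · exact hA _ (List.mem_cons_of_mem _ (mem_bpiece h').2)
      have hcV' : (i,(r,c)) ∉ Vpart lam T c r := fun h => (Vpart_not_mem h) rfl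
      have hjval := fpos_locate hsplit2 ha' hb' hcV' hzmid hjsig' hjmax'
      have hw2 : mvtWord lam T =
          ((U0part lam T c r ++ (U1part lam T c r ++ bpiece (r,c) A₂)).map (·.1))
            ++ i :: ((Vpart lam T c r).map (·.1)) := by
        rw [← hwp, hsplit2]
        simp [List.map_append, List.append_assoc]
      have hjlen2 : j =
          ((U0part lam T c r ++ (U1part lam T c r ++ bpiece (r,c) A₂)).map (·.1)).length := by
        simp [hjval]
      rw [hw2, hjlen2, set_mid]
      -- compute the word of T'
      have hsplitT' := mvtPairs_split (lam := lam) T' hcW hrH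
      have hsrem : msort (T' r c) = a :: A₂ := by
        rw [hT'rc]
        exact msort_caseA_rem hs
      have hmpc' : mpc T' c r = mpc T c r := by
        unfold mpc
        rw [hsrem, htake]
        rfl
      have hU1' : U1part lam T' c r = U1part lam T c r :=
        U1part_congr hmpc' (fun r' hr' => hTeq r' c (by omega) (by omega))
      have hd' : dpc T' c r = bpiece (r,c) A₂ := by
        unfold dpc
        rw [hsrem]
        rfl
      have hU0' : U0part lam T' c r = U0part lam T c r := by
        apply U0part_congr (fun c' hc' r' => hTeq r' c' (by omega) (by omega))
        intro t
        cases t with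
        | zero =>
          show mpc T' c (r+1) = mpc T c (r+1)
          unfold mpc
          rw [hT'r1c, htl, htl2]
          rfl
        | succ t => exact mpc_congr (hTeq (r+1+(t+1)) c (by omega) (by omega))
      have hVsplit : ∀ S : ℕ → ℕ → Multiset ℕ, Vpart lam S c r =
          dpc S c (r+1) ++ ((((List.range (colHeight lam c - r - 1 - 1)).map
              (fun t => dpc S c (r+1+(0+1+t)))).flatten)
            ++ ((List.range (lam.headD 0 - c - 1)).map (fun t => colPairs lam S (c+1+t))).flatten) := by
        intro S
        unfold Vpart
        rw [flatten_split _ (show 0 < colHeight lam c - r - 1 by omega)]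
        simp only [Nat.add_zero, Nat.sub_zero, List.range_zero, List.map_nil, List.flatten_nil,
          List.nil_append, List.append_assoc]
      have hdpc1' : dpc T' c (r+1) = bpiece (r+1,c) ((i+1) :: tl2) := by
        unfold dpc
        rw [hT'r1c, htl]
        show bpiece (r+1,c) (msort (T (r+1) c)) = _
        rw [htl2]
      have hdpc1 : dpc T c (r+1) = bpiece (r+1,c) tl2 := by
        unfold dpc
        rw [htl2]
        rfl
      have hhigh' : (((List.range (colHeight lam c - r - 1 - 1)).map
              (fun t => dpc T' c (r+1+(0+1+t)))).flatten)
          = (((List.range (colHeight lam c - r - 1 - 1)).map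
              (fun t => dpc T c (r+1+(0+1+t)))).flatten) := by
        congr 1
        apply List.map_congr_left
        intro t _
        exact dpc_congr (hTeq (r+1+(0+1+t)) c (by omega) (by omega))
      have hcols' : ((List.range (lam.headD 0 - c - 1)).map (fun t => colPairs lam T' (c+1+t))).flatten
          = ((List.range (lam.headD 0 - c - 1)).map (fun t => colPairs lam T (c+1+t))).flatten := by
        congr 1
        apply List.map_congr_left
        intro t _
        exact colPairs_congr (fun r' => hTeq r' (c+1+t) (by omega) (by omega))
      rw [← map_fst_mvtPairs lam T', hsplitT', hU0', hU1', hd', hVsplit T', hVsplit T,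
        hdpc1', hdpc1, hhigh', hcols']
      simp [List.map_append, List.append_assoc, bpiece_cons]
  · -- Case B : replace i by i+1 in place
    rw [if_neg hcase] at hTdef
    have hT'eq : T' = fun r' c' =>
        if r' = r ∧ c' = c then T r c - {i} + {i+1} else T r' c' := hTdef.symm
    have hT'rc : T' r c = T r c - {i} + {i+1} := by rw [hT'eq]; simp
    have hTeq : ∀ r' c', ¬(r' = r ∧ c' = c) → T' r' c' = T r' c' := by
      intro r' c' h
      rw [hT'eq]
      simp only [if_neg h]
    have hM' : msort (T r c - {i} + {i+1}) = A ++ (i+1) :: B := msort_caseB hs hA hB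
    have hsplitT' := mvtPairs_split (lam := lam) T' hcW hrH
    have hU0' : U0part lam T' c r = U0part lam T c r :=
      U0part_congr (fun c' hc' r' => hTeq r' c' (by omega))
        (fun t => mpc_congr (hTeq (r+1+t) c (by omega)))
    have hV' : Vpart lam T' c r = Vpart lam T c r :=
      Vpart_congr (fun t => dpc_congr (hTeq (r+1+t) c (by omega)))
        (fun c' hc' r' => hTeq r' c' (by omega))
    cases A with
    | cons a A₂ =>
      have htake : (msort (T r c)).take 1 = [a] := by rw [hs]; rfl
      have hdrop : (msort (T r c)).drop 1 = A₂ ++ i :: B := by rw [hs]; rfl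
      have hd : dpc T c r = bpiece (r,c) A₂ ++ (i,(r,c)) :: bpiece (r,c) B := by
        unfold dpc
        rw [hdrop, bpiece_append, bpiece_cons]
      have hsplit2 : mvtPairs lam T =
          U0part lam T c r ++ (U1part lam T c r ++ bpiece (r,c) A₂) ++ (i,(r,c)) ::
            (bpiece (r,c) B ++ Vpart lam T c r) := by
        rw [hsplitT, hd]
        simp only [List.append_assoc, List.cons_append]
        rfl
      have ha' : (i,(r,c)) ∉ U0part lam T c r := fun h => (U0part_not_mem h) rfl
      have hb' : ∀ z' ∈ U1part lam T c r ++ bpiece (r,c) A₂, z'.1 ≤ i := by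
        intro z' hz'
        rcases List.mem_append.1 hz' with h' | h'
        · refine U1part_le hlam hT hrH hiT ?_ h'
          rw [htake]
          intro x hx
          rw [List.mem_singleton] at hx
          exact hA x (by rw [hx]; simp)
        · exact hA _ (List.mem_cons_of_mem _ (mem_bpiece h').2)
      have hcV' : (i,(r,c)) ∉ bpiece (r,c) B ++ Vpart lam T c r := by
        intro h
        rcases List.mem_append.1 h with h' | h'
        · have := hB _ (mem_bpiece h').2
          simp at this
        · exact Vpart_not_mem h' rfl
      have hjval := fpos_locate hsplit2 ha' hb' hcV' hzmid hjsig' hjmax'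
      have hw2 : mvtWord lam T =
          ((U0part lam T c r ++ (U1part lam T c r ++ bpiece (r,c) A₂)).map (·.1))
            ++ i :: ((bpiece (r,c) B ++ Vpart lam T c r).map (·.1)) := by
        rw [← hwp, hsplit2]
        simp [List.map_append, List.append_assoc]
      have hjlen2 : j =
          ((U0part lam T c r ++ (U1part lam T c r ++ bpiece (r,c) A₂)).map (·.1)).length := by
        simp [hjval]
      rw [hw2, hjlen2, set_mid]
      -- now compute the word of T'
      have hmpc' : mpc T' c r = mpc T c r := by
        have h1 : (msort (T' r c)).take 1 = [a] := by rw [hT'rc, hM']; rfl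
        unfold mpc
        rw [h1, htake]
      have hU1' : U1part lam T' c r = U1part lam T c r :=
        U1part_congr hmpc' (fun r' hr' => hTeq r' c (by omega))
      have hd' : dpc T' c r = bpiece (r,c) A₂ ++ (i+1,(r,c)) :: bpiece (r,c) B := by
        have h1 : (msort (T' r c)).drop 1 = A₂ ++ (i+1) :: B := by rw [hT'rc, hM']; rfl
        unfold dpc
        rw [h1, bpiece_append, bpiece_cons]
      rw [← map_fst_mvtPairs lam T', hsplitT', hU0', hU1', hV', hd']
      simp [List.map_append, List.append_assoc]
    | nil =>
      simp only [List.nil_append] at hs hM'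
      have htake : (msort (T r c)).take 1 = [i] := by rw [hs]; rfl
      have hdrop : (msort (T r c)).drop 1 = B := by rw [hs]; rfl
      have hm : mpc T c r = [(i,(r,c))] := by
        unfold mpc
        rw [htake]
        rfl
      have hdpcB : dpc T c r = bpiece (r,c) B := by unfold dpc; rw [hdrop]
      have hsplit2 : mvtPairs lam T =
          U0part lam T c r ++ ([] : List (ℕ × ℕ × ℕ)) ++ (i,(r,c)) ::
            (((List.range r).reverse.map (mpc T c)).flatten
              ++ (((List.range r).map (dpc T c)).flatten
              ++ (bpiece (r,c) B ++ Vpart lam T c r))) := by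
        rw [hsplitT, hdpcB]
        unfold U1part
        rw [hm]
        simp only [List.append_assoc, List.cons_append, List.nil_append]
        rfl
      have ha' : (i,(r,c)) ∉ U0part lam T c r := fun h => (U0part_not_mem h) rfl
      have hcV' : (i,(r,c)) ∉ (((List.range r).reverse.map (mpc T c)).flatten
              ++ (((List.range r).map (dpc T c)).flatten
              ++ (bpiece (r,c) B ++ Vpart lam T c r))) := by
        intro h
        rcases List.mem_append.1 h with h' | h'
        · exact lowmin_not_mem h' rfl
        rcases List.mem_append.1 h' with h'' | h''
        · exact lowdrop_not_mem h'' rfl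
        rcases List.mem_append.1 h'' with h3 | h3
        · have := hB _ (mem_bpiece h3).2
          simp at this
        · exact Vpart_not_mem h3 rfl
      have hjval := fpos_locate hsplit2 ha' (by simp) hcV' hzmid hjsig' hjmax'
      have hw2 : mvtWord lam T =
          ((U0part lam T c r ++ ([] : List (ℕ × ℕ × ℕ))).map (·.1)) ++ i ::
            ((((List.range r).reverse.map (mpc T c)).flatten
              ++ (((List.range r).map (dpc T c)).flatten
              ++ (bpiece (r,c) B ++ Vpart lam T c r))).map (·.1)) := by
        rw [← hwp, hsplit2]
        simp [List.map_append, List.append_assoc]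
      have hjlen2 : j =
          ((U0part lam T c r ++ ([] : List (ℕ × ℕ × ℕ))).map (·.1)).length := by
        simp [hjval]
      rw [hw2, hjlen2, set_mid]
      have hmpc' : mpc T' c r = [(i+1,(r,c))] := by
        have h1 : (msort (T' r c)).take 1 = [i+1] := by rw [hT'rc, hM']; rfl
        unfold mpc
        rw [h1]
        rfl
      have hd' : dpc T' c r = bpiece (r,c) B := by
        have h1 : (msort (T' r c)).drop 1 = B := by rw [hT'rc, hM']; rfl
        unfold dpc
        rw [h1]
      have hlowmin : ((List.range r).reverse.map (mpc T' c)).flatten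
          = ((List.range r).reverse.map (mpc T c)).flatten := by
        congr 1
        apply List.map_congr_left
        intro r' hr'
        rw [List.mem_reverse, List.mem_range] at hr'
        exact mpc_congr (hTeq r' c (by omega))
      have hlowdrop : ((List.range r).map (dpc T' c)).flatten
          = ((List.range r).map (dpc T c)).flatten := by
        congr 1
        apply List.map_congr_left
        intro r' hr'
        rw [List.mem_range] at hr'
        exact dpc_congr (hTeq r' c (by omega))
      rw [← map_fst_mvtPairs lam T', hsplitT', hU0', hV', hd']
      unfold U1part
      rw [hmpc', hlowmin, hlowdrop]
      simp [List.map_append, List.append_assoc]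
end

section
/- Every highest weight multiset-valued tableau of shape λ (i.e., one killed by all raising operators e_i) has the property that its i-th row contains only entries equal to i. -/
def sstep (i : ℕ) : ℕ × ℕ → ℕ → ℕ × ℕ := fun pm a =>
  if a = i then (if 0 < pm.2 then (pm.1, pm.2 - 1) else (pm.1 + 1, pm.2))
  else if a = i + 1 then (pm.1, pm.2 + 1) else pm

lemma sigFold_eq (i : ℕ) (w : List ℕ) : sigFold i w = w.foldl (sstep i) (0, 0) := rfl

lemma sstep_other (i a p m : ℕ) (h1 : a ≠ i) (h2 : a ≠ i + 1) :
    sstep i (p, m) a = (p, m) := by simp [sstep, h1, h2]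

lemma sstep_minus (i p m : ℕ) : sstep i (p, m) (i + 1) = (p, m + 1) := by
  simp [sstep, if_neg (by omega : ¬ i + 1 = i)]

lemma sstep_plus_zero (i p : ℕ) : sstep i (p, 0) i = (p + 1, 0) := by simp [sstep]

lemma sstep_plus_succ (i p m : ℕ) : sstep i (p, m + 1) i = (p, m) := by simp [sstep]

lemma sig_snd_indep (i : ℕ) : ∀ (w : List ℕ) (p p' m : ℕ),
    (w.foldl (sstep i) (p, m)).2 = (w.foldl (sstep i) (p', m)).2 := by
  intro w
  induction w with
  | nil => intro p p' m; rfl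
  | cons a t ih =>
    intro p p' m
    rcases eq_or_ne a i with rfl | ha
    · rcases m with _ | m
      · rw [List.foldl_cons, List.foldl_cons, sstep_plus_zero, sstep_plus_zero]; exact ih _ _ _
      · rw [List.foldl_cons, List.foldl_cons, sstep_plus_succ, sstep_plus_succ]; exact ih _ _ _
    · rcases eq_or_ne a (i+1) with rfl | ha'
      · rw [List.foldl_cons, List.foldl_cons, sstep_minus, sstep_minus]; exact ih _ _ _
      · rw [List.foldl_cons, List.foldl_cons, sstep_other i a _ _ ha ha',
          sstep_other i a _ _ ha ha']; exact ih _ _ _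

lemma sig_snd_mono (i : ℕ) : ∀ (w : List ℕ) (p p' m m' : ℕ), m ≤ m' →
    (w.foldl (sstep i) (p, m)).2 ≤ (w.foldl (sstep i) (p', m')).2 := by
  intro w
  induction w with
  | nil => intro p p' m m' h; exact h
  | cons a t ih =>
    intro p p' m m' h
    rw [List.foldl_cons, List.foldl_cons]
    rcases eq_or_ne a i with rfl | ha
    · rcases m with _ | m
      · rcases m' with _ | m'
        · rw [sstep_plus_zero, sstep_plus_zero]; exact ih _ _ _ _ le_rfl
        · rw [sstep_plus_zero, sstep_plus_succ]; exact ih _ _ _ _ (by omega)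
      · rcases m' with _ | m'
        · omega
        · rw [sstep_plus_succ, sstep_plus_succ]; exact ih _ _ _ _ (by omega)
    · rcases eq_or_ne a (i+1) with rfl | ha'
      · rw [sstep_minus, sstep_minus]; exact ih _ _ _ _ (by omega)
      · rw [sstep_other i a _ _ ha ha', sstep_other i a _ _ ha ha']; exact ih _ _ _ _ h

lemma sig_count (i : ℕ) : ∀ (w : List ℕ) (p m : ℕ),
    (w.foldl (sstep i) (p, m)).1 + m + w.count (i+1) =
      (w.foldl (sstep i) (p, m)).2 + p + w.count i := by
  intro w
  induction w with
  | nil => intro p m; simp; omega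
  | cons a t ih =>
    intro p m
    rw [List.foldl_cons]
    by_cases ha : a = i
    · rw [ha, List.count_cons_of_ne (by omega : (i:ℕ) ≠ i + 1), List.count_cons_self]
      rcases m with _ | m
      · rw [sstep_plus_zero]; have := ih (p+1) 0; omega
      · rw [sstep_plus_succ]; have := ih p m; omega
    · by_cases ha' : a = i + 1
      · rw [ha', List.count_cons_self, List.count_cons_of_ne (by omega : (i:ℕ) + 1 ≠ i),
          sstep_minus]
        have := ih p (m+1); omega
      · rw [List.count_cons_of_ne ha',
          List.count_cons_of_ne ha, sstep_other i a _ _ ha ha']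
        have := ih p m; omega

lemma sig_B (i : ℕ) : ∀ (w : List ℕ) (m p p' : ℕ),
    0 < (w.foldl (sstep i) (0, m)).1 →
    (w.foldl (sstep i) (p, m+1)).2 = (w.foldl (sstep i) (p', m)).2 := by
  intro w
  induction w with
  | nil => intro m p p' h; simp at h
  | cons a t ih =>
    intro m p p' h
    rw [List.foldl_cons] at h ⊢
    rw [List.foldl_cons]
    rcases eq_or_ne a i with rfl | ha
    · rcases m with _ | m
      · rw [sstep_plus_succ, sstep_plus_zero]
        exact sig_snd_indep _ t p (p'+1) 0
      · rw [sstep_plus_succ, sstep_plus_succ]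
        rw [sstep_plus_succ] at h
        exact ih _ _ _ h
    · rcases eq_or_ne a (i+1) with rfl | ha'
      · rw [sstep_minus, sstep_minus]
        rw [sstep_minus] at h
        exact ih _ _ _ h
      · rw [sstep_other i a _ _ ha ha', sstep_other i a _ _ ha ha']
        rw [sstep_other i a _ _ ha ha'] at h
        exact ih _ _ _ h

lemma sig_A (i : ℕ) : ∀ (w : List ℕ), 0 < (sigFold i w).2 →
    ∃ j, w[j]? = some (i+1) ∧ (sigFold i (w.drop (j+1))).1 = 0 := by
  intro w
  induction w with
  | nil => intro h; simp [sigFold] at h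
  | cons a t ih =>
    intro h
    rw [sigFold_eq, List.foldl_cons] at h
    rcases eq_or_ne a i with rfl | ha
    · rw [sstep_plus_zero, sig_snd_indep _ t 1 0 0] at h
      obtain ⟨j, hj1, hj2⟩ := ih (by rwa [sigFold_eq])
      exact ⟨j+1, by simpa using hj1, by simpa using hj2⟩
    · rcases eq_or_ne a (i+1) with rfl | ha'
      · rw [sstep_minus] at h
        by_cases hp : (sigFold i t).1 = 0
        · exact ⟨0, by simp, by simpa using hp⟩
        · have hB := sig_B i t 0 0 0 (by rw [sigFold_eq] at hp; omega)
          rw [hB] at h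
          obtain ⟨j, hj1, hj2⟩ := ih (by rwa [sigFold_eq])
          exact ⟨j+1, by simpa using hj1, by simpa using hj2⟩
      · rw [sstep_other i a _ _ ha ha'] at h
        obtain ⟨j, hj1, hj2⟩ := ih (by rwa [sigFold_eq])
        exact ⟨j+1, by simpa using hj1, by simpa using hj2⟩

lemma sig_suffix (i : ℕ) {s w : List ℕ} (h : s <:+ w) :
    (sigFold i s).2 ≤ (sigFold i w).2 := by
  obtain ⟨u, rfl⟩ := h
  induction u with
  | nil => simp
  | cons a u ih =>
    refine le_trans ih ?_
    rw [sigFold_eq, sigFold_eq, List.cons_append, List.foldl_cons]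
    rcases eq_or_ne a i with rfl | ha
    · rw [sstep_plus_zero, sig_snd_indep _ _ 1 0 0]
    · rcases eq_or_ne a (i+1) with rfl | ha'
      · rw [sstep_minus]; exact sig_snd_mono _ _ 0 0 0 1 (by omega)
      · rw [sstep_other i a _ _ ha ha']

lemma sig_ePos (i : ℕ) (w : List ℕ) (h : 0 < (sigFold i w).2) : ePos i w ≠ none := by
  obtain ⟨j, hj1, hj2⟩ := sig_A i w h
  have hjlen : j < w.length := by
    by_contra hc
    rw [List.getElem?_eq_none (by omega)] at hj1
    simp at hj1
  have hmem : j ∈ (List.range w.length).filter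
      (fun j => decide (w[j]? = some (i + 1) ∧ (sigFold i (w.drop (j + 1))).1 = 0)) := by
    rw [List.mem_filter]
    exact ⟨List.mem_range.mpr hjlen, by simp [hj1, hj2]⟩
  unfold ePos
  rw [Ne, List.head?_eq_none_iff]
  exact List.ne_nil_of_mem hmem

lemma getD_le : ∀ (t : List ℕ) (a : ℕ), (∀ x ∈ t, x ≤ a) → ∀ k, t.getD k 0 ≤ a := by
  intro t
  induction t with
  | nil => intro a _ k; simp
  | cons b s ih =>
    intro a h k
    rcases k with _ | k
    · exact h b (List.mem_cons_self)
    · exact ih a (fun x hx => h x (List.mem_cons_of_mem _ hx)) k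

lemma getD_mono : ∀ (l : List ℕ), l.Pairwise (· ≥ ·) → ∀ r r', r ≤ r' →
    l.getD r' 0 ≤ l.getD r 0 := by
  intro l
  induction l with
  | nil => intro _ r r' _; simp
  | cons a t ih =>
    intro hs r r' hrr
    rcases r with _ | r
    · rcases r' with _ | r'
      · exact le_rfl
      · exact getD_le t a (fun x hx => List.rel_of_pairwise_cons hs hx) r'
    · rcases r' with _ | r'
      · omega
      · exact ih hs.of_cons r r' (by omega)

lemma height_lt : ∀ (lam : List ℕ), lam.Pairwise (· ≥ ·) → ∀ (r c : ℕ),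
    c < lam.getD r 0 → r < colHeight lam c := by
  intro lam
  induction lam with
  | nil => intro _ r c h; simp at h
  | cons a t ih =>
    intro hs r c h
    rcases r with _ | r
    · have ha : c < a := h
      unfold colHeight
      rw [List.filter_cons, if_pos (by simpa using ha)]
      simp
    · have ht : c < t.getD r 0 := h
      have ha : c < a := by
        have := getD_le t a (fun x hx => List.rel_of_pairwise_cons hs hx) r
        omega
      unfold colHeight
      rw [List.filter_cons, if_pos (by simpa using ha)]
      have := ih hs.of_cons r c ht
      unfold colHeight at this
      simpa using this

lemma row_le {n : ℕ} {lam : List ℕ} {T : ℕ → ℕ → Multiset ℕ} (hT : IsMVT n lam T) :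
    ∀ (d r c : ℕ), InShape lam r (c + d + 1) → ∀ x ∈ T r c, ∀ y ∈ T r (c + d + 1), x ≤ y := by
  intro d
  induction d with
  | zero => intro r c h x hx y hy; exact hT.2.2.2.1 r c h x hx y hy
  | succ d ih =>
    intro r c h x hx y hy
    have h' : InShape lam r (c + d + 1) := by
      have : c + d + 1 < c + (d+1) + 1 := by omega
      exact lt_of_lt_of_le this (le_of_lt h)
    obtain ⟨z, hz⟩ := Multiset.exists_mem_of_ne_zero (hT.1 r (c + d + 1) h')
    have h2 : InShape lam r ((c + d + 1) + 1) := by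
      have e : c + (d + 1) + 1 = (c + d + 1) + 1 := by omega
      rwa [e] at h
    have hy' : y ∈ T r ((c + d + 1) + 1) := by
      have e : c + (d + 1) + 1 = (c + d + 1) + 1 := by omega
      rwa [e] at hy
    exact le_trans (ih r c h' x hx z hz) (hT.2.2.2.1 r (c + d + 1) h2 z hz y hy')

lemma col_lt {n : ℕ} {lam : List ℕ} (hsort : lam.Pairwise (· ≥ ·))
    {T : ℕ → ℕ → Multiset ℕ} (hT : IsMVT n lam T) :
    ∀ (d r c : ℕ), InShape lam (r + d + 1) c → ∀ x ∈ T r c, ∀ y ∈ T (r + d + 1) c, x < y := by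
  intro d
  induction d with
  | zero => intro r c h x hx y hy; exact hT.2.2.2.2 r c h x hx y hy
  | succ d ih =>
    intro r c h x hx y hy
    have h' : InShape lam (r + d + 1) c :=
      lt_of_lt_of_le h (getD_mono lam hsort _ _ (by omega))
    obtain ⟨z, hz⟩ := Multiset.exists_mem_of_ne_zero (hT.1 (r + d + 1) c h')
    have h2 : InShape lam ((r + d + 1) + 1) c := by
      have e : r + (d + 1) + 1 = (r + d + 1) + 1 := by omega
      rwa [e] at h
    have hy' : y ∈ T ((r + d + 1) + 1) c := by
      have e : r + (d + 1) + 1 = (r + d + 1) + 1 := by omega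
      rwa [e] at hy
    exact lt_trans (ih r c h' x hx z hz) (hT.2.2.2.2 (r + d + 1) c h2 z hz y hy')

lemma entry_ge {n : ℕ} {lam : List ℕ} (hsort : lam.Pairwise (· ≥ ·))
    {T : ℕ → ℕ → Multiset ℕ} (hT : IsMVT n lam T) :
    ∀ (r c : ℕ), InShape lam r c → ∀ x ∈ T r c, r + 1 ≤ x := by
  intro r
  induction r with
  | zero => intro c h x hx; exact (hT.2.2.1 0 c x hx).1
  | succ r ih =>
    intro c h x hx
    have h' : InShape lam r c := lt_of_lt_of_le h (getD_mono lam hsort _ _ (by omega))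
    obtain ⟨z, hz⟩ := Multiset.exists_mem_of_ne_zero (hT.1 r c h')
    have := ih c h' z hz
    have := col_lt hsort hT 0 r c h z hz x hx
    omega

lemma mem_colWord {sh : List ℕ} {T : ℕ → ℕ → Multiset ℕ} {c y : ℕ}
    (h : y ∈ colWord sh T c) : ∃ r', y ∈ T r' c := by
  unfold colWord at h
  rcases List.mem_append.mp h with h | h <;>
  · obtain ⟨l', hl', hy⟩ := List.mem_flatten.mp h
    obtain ⟨r', _, rfl⟩ := List.mem_map.mp hl'
    refine ⟨r', (Multiset.mem_sort (· ≤ ·)).mp ?_⟩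
    first
      | exact (List.take_sublist 1 _).subset hy
      | exact (List.drop_sublist 1 _).subset hy

lemma colWord_of_mem {sh : List ℕ} {T : ℕ → ℕ → Multiset ℕ} {r c y : ℕ}
    (hr : r < colHeight sh c) (hy : y ∈ T r c) : y ∈ colWord sh T c := by
  have hy' : y ∈ msort (T r c) := (Multiset.mem_sort _).mpr hy
  rw [← List.take_append_drop 1 (msort (T r c))] at hy'
  unfold colWord
  rcases List.mem_append.mp hy' with h | h
  · exact List.mem_append.mpr (Or.inl (List.mem_flatten.mpr
      ⟨(msort (T r c)).take 1,
        List.mem_map.mpr ⟨r, by simp [List.mem_reverse, List.mem_range, hr], rfl⟩, h⟩))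
  · exact List.mem_append.mpr (Or.inr (List.mem_flatten.mpr
      ⟨(msort (T r c)).drop 1,
        List.mem_map.mpr ⟨r, by simp [List.mem_range, hr], rfl⟩, h⟩))

lemma sufFlatten (f : ℕ → List ℕ) (n k : ℕ) (hk : k < n) (t : List ℕ) (ht : t <:+ f k) :
    (t ++ ((List.range (n - (k+1))).map (fun j => f (k+1+j))).flatten) <:+
      ((List.range n).map f).flatten := by
  obtain ⟨u, hu⟩ := ht
  refine ⟨((List.range k).map f).flatten ++ u, ?_⟩
  have hn : n = (k+1) + (n - (k+1)) := by omega
  have hr : List.range n = (List.range k ++ [k]) ++ (List.range (n-(k+1))).map (fun x => (k+1) + x) := by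
    conv_lhs => rw [hn]
    rw [List.range_add, List.range_succ]
  rw [hr]
  simp only [List.map_append, List.flatten_append, List.map_map, List.map_cons,
    List.map_nil, List.flatten_cons, List.flatten_nil, List.append_nil]
  rw [← hu]
  simp [Function.comp_def, List.append_assoc]

lemma dropWhile_ge (v : ℕ) : ∀ (l : List ℕ), l.Pairwise (· ≤ ·) →
    ∀ y ∈ l.dropWhile (fun y => decide (y < v)), v ≤ y := by
  intro l
  induction l with
  | nil => simp
  | cons a t ih =>
    intro hs y hy
    rw [List.dropWhile_cons] at hy
    by_cases hav : a < v
    · rw [if_pos (by simpa using hav)] at hy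
      exact ih hs.of_cons y hy
    · rw [if_neg (by simpa using hav)] at hy
      rcases List.mem_cons.mp hy with rfl | hy
      · omega
      · have := List.rel_of_pairwise_cons hs hy; omega

lemma mem_dropWhile_self (v : ℕ) (l : List ℕ) (hv : v ∈ l) :
    v ∈ l.dropWhile (fun y => decide (y < v)) := by
  rw [← List.takeWhile_append_dropWhile (p := fun y => decide (y < v)) (l := l)] at hv
  rcases List.mem_append.mp hv with h | h
  · have := List.mem_takeWhile_imp h
    simp at this
  · exact h

/-- Every highest weight multiset-valued tableau of shape `λ` has all
entries of its `i`-th row (1-indexed) equal to `i`. -/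
theorem mvt_highest_weight_rows
    (n : ℕ) (lam : List ℕ) (hlam : IsPartition lam)
    (T : ℕ → ℕ → Multiset ℕ) (hT : IsMVT n lam T) (hhw : MvtHW lam T) :
    ∀ r c, InShape lam r c → ∀ x ∈ T r c, x = r + 1 := by
  obtain ⟨hsort, hpos⟩ := hlam
  suffices key : ∀ v r c, InShape lam r c → v ∈ T r c → v = r + 1 by
    intro r c h x hx; exact key x r c h hx
  intro v
  induction v using Nat.strong_induction_on with
  | _ v IH =>
  intro r c hrc hv
  by_contra hne
  have hge : r + 1 ≤ v := entry_ge hsort hT r c hrc v hv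
  have hv2 : r + 2 ≤ v := by omega
  obtain ⟨i, rfl⟩ : ∃ i, v = i + 1 := ⟨v - 1, by omega⟩
  have hi1 : 1 ≤ i := by omega
  have IHi : ∀ r' c', InShape lam r' c' → i ∈ T r' c' → i = r' + 1 :=
    fun r' c' h hm => IH i (by omega) r' c' h hm
  have hcW : c < lam.headD 0 := by
    have h0 : lam.getD r 0 ≤ lam.getD 0 0 := getD_mono lam hsort 0 r (by omega)
    have h1 : lam.getD 0 0 = lam.headD 0 := by cases lam <;> simp [List.getD]
    have h2 : c < lam.getD r 0 := hrc
    omega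
  have hrh : r < colHeight lam c := height_lt lam hsort r c hrc
  have hright : ∀ c'', c < c'' → ∀ r'' y, y ∈ T r'' c'' → y ≠ i := by
    intro c'' hcc r'' y hy hyi
    rw [hyi] at hy
    have hsh : InShape lam r'' c'' := by
      by_contra hns
      rw [hT.2.1 r'' c'' hns] at hy
      simp at hy
    have hr'' : i = r'' + 1 := IHi r'' c'' hsh hy
    have hrr : r ≤ r'' := by omega
    rcases eq_or_lt_of_le hrr with rfl | hlt
    · obtain ⟨d, rfl⟩ : ∃ d, c'' = c + d + 1 := ⟨c'' - c - 1, by omega⟩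
      have := row_le hT d r c hsh (i+1) hv i hy
      omega
    · have hshr : InShape lam r c'' := lt_of_lt_of_le hsh (getD_mono lam hsort r r'' hrr)
      obtain ⟨z, hz⟩ := Multiset.exists_mem_of_ne_zero (hT.1 r c'' hshr)
      obtain ⟨d, rfl⟩ : ∃ d, c'' = c + d + 1 := ⟨c'' - c - 1, by omega⟩
      have h1 : (i+1) ≤ z := row_le hT d r c hshr (i+1) hv z hz
      obtain ⟨d', hd'⟩ : ∃ d', r'' = r + d' + 1 := ⟨r'' - r - 1, by omega⟩
      rw [hd'] at hsh hy
      have h2 : z < i := col_lt hsort hT d' r (c+d+1) hsh z hz i hy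
      omega
  have hRne : ∀ y ∈ ((List.range (lam.headD 0 - (c+1))).map
      (fun j => colWord lam T (c+1+j))).flatten, y ≠ i := by
    intro y hy
    obtain ⟨l', hl', hyl⟩ := List.mem_flatten.mp hy
    obtain ⟨j, _, rfl⟩ := List.mem_map.mp hl'
    obtain ⟨r'', hy''⟩ := mem_colWord hyl
    exact hright (c+1+j) (by omega) r'' y hy''
  have hmain : ∃ s, s <:+ mvtWord lam T ∧ (i+1) ∈ s ∧ ∀ y ∈ s, y ≠ i := by
    have hvl : (i+1) ∈ msort (T r c) := (Multiset.mem_sort (· ≤ ·)).mpr hv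
    by_cases hcase : (i+1) ∈ (msort (T r c)).drop 1
    · set dw := ((msort (T r c)).drop 1).dropWhile (fun y => decide (y < i+1)) with hdw
      have hsorted : ((msort (T r c)).drop 1).Pairwise (· ≤ ·) :=
        List.Pairwise.sublist (List.drop_sublist 1 _) (Multiset.pairwise_sort _ _)
      have hvdw : (i+1) ∈ dw := mem_dropWhile_self (i+1) _ hcase
      have hdwge : ∀ y ∈ dw, (i+1) ≤ y := dropWhile_ge (i+1) _ hsorted
      have h1 : dw <:+ (fun r' => (msort (T r' c)).drop 1) r :=
        ⟨_, List.takeWhile_append_dropWhile⟩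
      have h2 := sufFlatten (fun r' => (msort (T r' c)).drop 1) (colHeight lam c) r hrh dw h1
      have h3 : ((List.range (colHeight lam c)).map
          (fun r' => (msort (T r' c)).drop 1)).flatten <:+ colWord lam T c := ⟨_, rfl⟩
      have h4 := h2.trans h3
      have h5 := sufFlatten (colWord lam T) (lam.headD 0) c hcW _ h4
      refine ⟨_, h5, ?_, ?_⟩
      · exact List.mem_append.mpr (Or.inl (List.mem_append.mpr (Or.inl hvdw)))
      · intro y hy
        rcases List.mem_append.mp hy with hy | hy
        · rcases List.mem_append.mp hy with hy | hy
          · have := hdwge y hy; omega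
          · obtain ⟨l', hl', hyl⟩ := List.mem_flatten.mp hy
            obtain ⟨j, _, rfl⟩ := List.mem_map.mp hl'
            have hyT : y ∈ T (r+1+j) c := (Multiset.mem_sort (· ≤ ·)).mp
              ((List.drop_sublist 1 _).subset hyl)
            intro hyi
            rw [hyi] at hyT
            have hsh : InShape lam (r+1+j) c := by
              by_contra hns
              rw [hT.2.1 _ _ hns] at hyT; simp at hyT
            have e : r + 1 + j = r + j + 1 := by omega
            rw [e] at hyT hsh
            have := col_lt hsort hT j r c hsh (i+1) hv i hyT
            omega
        · exact hRne y hy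
    · have hmin : ∀ y ∈ T r c, (i+1) ≤ y := by
        intro y hy
        have hyl : y ∈ msort (T r c) := (Multiset.mem_sort (· ≤ ·)).mpr hy
        have hvt : (i+1) ∈ (msort (T r c)).take 1 := by
          rw [← List.take_append_drop 1 (msort (T r c))] at hvl
          rcases List.mem_append.mp hvl with h | h
          · exact h
          · exact absurd h hcase
        have hsorted : (msort (T r c)).Pairwise (· ≤ ·) := Multiset.pairwise_sort _ _
        cases hl : msort (T r c) with
        | nil => rw [hl] at hyl; simp at hyl
        | cons a tl =>
          rw [hl] at hvt hyl hsorted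
          simp at hvt
          rcases List.mem_cons.mp hyl with rfl | hyt
          · omega
          · have := List.rel_of_pairwise_cons hsorted hyt
            omega
      have hvcol : (i+1) ∈ colWord lam T c := colWord_of_mem hrh hv
      have h5 := sufFlatten (colWord lam T) (lam.headD 0) c hcW _
        (List.suffix_refl (colWord lam T c))
      refine ⟨_, h5, List.mem_append.mpr (Or.inl hvcol), ?_⟩
      intro y hy
      rcases List.mem_append.mp hy with hy | hy
      · obtain ⟨r'', hyT⟩ := mem_colWord hy
        intro hyi
        rw [hyi] at hyT
        have hsh : InShape lam r'' c := by
          by_contra hns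
          rw [hT.2.1 _ _ hns] at hyT; simp at hyT
        have hr'' : i = r'' + 1 := IHi r'' c hsh hyT
        have hrr : r ≤ r'' := by omega
        rcases eq_or_lt_of_le hrr with rfl | hlt
        · have := hmin i hyT; omega
        · obtain ⟨d', rfl⟩ : ∃ d', r'' = r + d' + 1 := ⟨r'' - r - 1, by omega⟩
          have := col_lt hsort hT d' r c hsh (i+1) hv i hyT
          omega
      · exact hRne y hy
  obtain ⟨s, hs, hvs, hnis⟩ := hmain
  have hcnt1 : 0 < s.count (i+1) := List.count_pos_iff.mpr hvs
  have hcnt0 : s.count i = 0 := List.count_eq_zero.mpr (fun h => hnis i h rfl)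
  have hid := sig_count i s 0 0
  have hms : 0 < (sigFold i s).2 := by
    rw [sigFold_eq]; omega
  have hmw : 0 < (sigFold i (mvtWord lam T)).2 := lt_of_lt_of_le hms (sig_suffix i hs)
  have hne' := sig_ePos i (mvtWord lam T) hmw
  have hE := hhw i hi1
  unfold mvtE at hE
  rw [Option.map_eq_none_iff] at hE
  exact hne' hE
end
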